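/- For every K ≥ 1 there exist C(K) > 0 and s₀(K) ≥ 1 such that for all s ≥ s₀(K), all y with |y| ≤ 2K·s^{1/4}, and all q ∈ ℂ with |q| ≤ 1: |B(q,y,s)| ≤ C(K)·|q|². Moreover there exist C > 0 and s₁ ≥ 1 such that for all s ≥ s₁, all y with |y| ≥ s^{1/4} and all q ∈ ℂ with |q| ≤ 1: |B(q,y,s)| ≤ C·|q|^{p̄}, where p̄ = min(p,2). -/

import Mathlib

open Complex

/-- `x^w := exp(w · log x)` for a positive real base `x` and complex exponent `w`. -/
noncomputable def rcpow (x : ℝ) (w : ℂ) : ℂ := Complex.exp (w * Real.log x)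

/-- The approximate profile
`φ(y,s) = κ^{−iδ}·(p−1 + b y²/√s)^{−(1+iδ)/(p−1)} + (1+iδ)·a/√s`. -/
noncomputable def phiA (p δ κ b a : ℝ) (y s : ℝ) : ℂ :=
  rcpow κ (-(Complex.I * δ)) *
    rcpow (p - 1 + b * y ^ 2 / Real.sqrt s) (-(1 + Complex.I * δ) / (p - 1)) +
  (1 + Complex.I * δ) * ((a / Real.sqrt s : ℝ) : ℂ)

/-- The quadratic term
`B(q,y,s) = (1+iδ)(|φ+q|^{p−1}(φ+q) − |φ|^{p−1}φ − |φ|^{p−1}q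
  − ((p−1)/2)|φ|^{p−3}φ(φ·conj q + conj φ·q))`. -/
noncomputable def Bq (p δ κ b a : ℝ) (q : ℂ) (y s : ℝ) : ℂ :=
  (1 + Complex.I * δ) *
    (((‖phiA p δ κ b a y s + q‖ ^ (p - 1) : ℝ) : ℂ) * (phiA p δ κ b a y s + q)
      - ((‖phiA p δ κ b a y s‖ ^ (p - 1) : ℝ) : ℂ) * phiA p δ κ b a y s
      - ((‖phiA p δ κ b a y s‖ ^ (p - 1) : ℝ) : ℂ) * q
      - (((p - 1) / 2 : ℝ) : ℂ) * ((‖phiA p δ κ b a y s‖ ^ (p - 3) : ℝ) : ℂ) *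
          phiA p δ κ b a y s *
          (phiA p δ κ b a y s * (starRingEnd ℂ) q + (starRingEnd ℂ) (phiA p δ κ b a y s) * q))


open Set

noncomputable def Complex.abs : AbsoluteValue ℂ ℝ where
  toFun := fun z => ‖z‖
  map_mul' := norm_mul
  nonneg' := norm_nonneg
  eq_zero' := fun _ => norm_eq_zero
  add_le' := norm_add_le

lemma Complex.norm_eq_abs (z : ℂ) : ‖z‖ = Complex.abs z := rfl

lemma Complex.abs_ofReal (r : ℝ) : Complex.abs (r : ℂ) = |r| := Complex.norm_real r

lemma Complex.abs_conj (z : ℂ) : Complex.abs ((starRingEnd ℂ) z) = Complex.abs z :=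
  Complex.norm_conj z

lemma Complex.abs_I : Complex.abs Complex.I = 1 := Complex.norm_I

lemma Complex.abs_exp (z : ℂ) : Complex.abs (Complex.exp z) = Real.exp z.re := Complex.norm_exp z

lemma Complex.sq_abs (z : ℂ) : Complex.abs z ^ 2 = Complex.normSq z := Complex.sq_norm z

lemma Complex.abs_re_le_abs (z : ℂ) : |z.re| ≤ Complex.abs z := Complex.abs_re_le_norm z

noncomputable def Fp (p : ℝ) (z : ℂ) : ℂ := ((Complex.abs z ^ (p-1) : ℝ) : ℂ) * z

noncomputable def linp (p : ℝ) (z q : ℂ) : ℂ :=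
  ((Complex.abs z ^ (p-1) : ℝ) : ℂ) * q +
  (((p-1)/2 : ℝ) : ℂ) * ((Complex.abs z ^ (p-3) : ℝ) : ℂ) * z *
    (z * (starRingEnd ℂ) q + (starRingEnd ℂ) z * q)

lemma rpoly (z q : ℂ) (t : ℝ) :
    Complex.normSq (z + (t:ℂ)*q) =
      Complex.normSq z + (2 * ((starRingEnd ℂ) z * q).re) * t + Complex.normSq q * t^2 := by
  simp only [Complex.normSq_apply, Complex.add_re, Complex.add_im, Complex.mul_re,
    Complex.mul_im, Complex.conj_re, Complex.conj_im, Complex.ofReal_re, Complex.ofReal_im]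
  ring

lemma rder_eq (z q : ℂ) (t : ℝ) :
    (2 * ((starRingEnd ℂ) z * q).re) + 2 * Complex.normSq q * t
      = 2 * ((starRingEnd ℂ) (z + (t:ℂ)*q) * q).re := by
  simp only [Complex.normSq_apply, Complex.add_re, Complex.add_im, Complex.mul_re,
    Complex.mul_im, Complex.conj_re, Complex.conj_im, Complex.ofReal_re, Complex.ofReal_im,
    map_add, map_mul, Complex.conj_ofReal]
  ring

lemma rder_bound (z q : ℂ) (t : ℝ) :
    |(2 * ((starRingEnd ℂ) z * q).re) + 2 * Complex.normSq q * t|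
      ≤ 2 * Complex.abs (z + (t:ℂ)*q) * Complex.abs q := by
  rw [rder_eq, abs_mul, _root_.abs_two, mul_assoc]
  gcongr 2 * ?_
  calc |((starRingEnd ℂ) (z + (t:ℂ)*q) * q).re|
      ≤ Complex.abs ((starRingEnd ℂ) (z + (t:ℂ)*q) * q) := Complex.abs_re_le_abs _
    _ = Complex.abs (z + (t:ℂ)*q) * Complex.abs q := by rw [map_mul, Complex.abs_conj]

lemma sq_to_rpow {S : ℝ} (hS : 0 ≤ S) (x : ℝ) : ((S^2 : ℝ)) ^ x = S ^ (2*x) := by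
  have h2 : (S^2 : ℝ) = S ^ (2:ℝ) := by
    rw [← Real.rpow_natCast S 2]; norm_num
  rw [h2, ← Real.rpow_mul hS]

lemma taylor_core (p : ℝ) (hp : 1 < p) (z q : ℂ) (c : ℝ) (hc : 0 < c)
    (hlow : ∀ t ∈ Set.Icc (0:ℝ) 1, c ≤ Complex.abs (z + (t:ℂ)*q))
    (D : ℝ) (hD : ∀ t ∈ Set.Icc (0:ℝ) 1, Complex.abs (z + (t:ℂ)*q) ^ (p-2) ≤ D) :
    Complex.abs (Fp p (z+q) - Fp p z - linp p z q)
      ≤ ((p-1)*|p-3| + 3*(p-1)) * D * Complex.abs q ^ 2 := by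
  set α : ℝ := (p-1)/2 with hα_def
  have hα : 0 < α := by rw [hα_def]; linarith
  set aq : ℝ := Complex.abs q with haq
  set B : ℝ := 2 * ((starRingEnd ℂ) z * q).re with hB
  set C2 : ℝ := Complex.normSq q with hC2
  set w : ℝ → ℂ := fun t => z + (t:ℂ)*q with hw_def
  set r : ℝ → ℝ := fun t => Complex.normSq z + B*t + C2*t^2 with hr_def
  set rd : ℝ → ℝ := fun t => B + 2*C2*t with hrd_def
  have hr_sq : ∀ t, r t = (Complex.abs (w t))^2 := by
    intro t
    rw [hr_def, hw_def]
    simp only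
    rw [← rpoly, Complex.sq_abs]
  have hw : ∀ t : ℝ, HasDerivAt w q t := by
    intro t
    have h1 : HasDerivAt (fun t : ℝ => (t:ℂ)) 1 t := Complex.ofRealCLM.hasDerivAt
    have h2 : HasDerivAt (fun t : ℝ => z + (t:ℂ)*q) q t := by
      simpa using (h1.mul_const q).const_add z
    exact h2
  have hrd : ∀ t : ℝ, HasDerivAt r (rd t) t := by
    intro t
    have h := (((hasDerivAt_const t (Complex.normSq z)).add
        ((hasDerivAt_id t).const_mul B)).add ((hasDerivAt_pow 2 t).const_mul C2))
    refine h.congr_deriv ?_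
    simp only [hrd_def]
    push_cast; ring
  have hrd_bd : ∀ t : ℝ, |rd t| ≤ 2 * Complex.abs (w t) * aq := by
    intro t
    exact rder_bound z q t
  -- positivity on segment
  have hSpos : ∀ t ∈ Set.Icc (0:ℝ) 1, 0 < Complex.abs (w t) := fun t ht =>
    lt_of_lt_of_le hc (hlow t ht)
  have hr_pos : ∀ t ∈ Set.Icc (0:ℝ) 1, 0 < r t := by
    intro t ht; rw [hr_sq]; exact pow_pos (hSpos t ht) 2
  set g : ℝ → ℝ := fun t => rd t * α * r t ^ (α-1) with hg_def
  set gd : ℝ → ℝ := fun t =>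
    (2*C2) * α * r t ^ (α-1) + rd t * α * (rd t * (α-1) * r t ^ (α-1-1)) with hgd_def
  set h0 : ℝ → ℂ := fun t => ((r t ^ α : ℝ):ℂ) * w t with hh0_def
  set h1 : ℝ → ℂ := fun t => ((g t : ℝ):ℂ) * w t + ((r t ^ α : ℝ):ℂ) * q with hh1_def
  set h2 : ℝ → ℂ := fun t =>
    (((gd t : ℝ):ℂ) * w t + ((g t : ℝ):ℂ) * q) + ((g t:ℝ):ℂ) * q with hh2_def
  set u : ℝ → ℂ := fun t => h0 t + ((1-t : ℝ):ℂ) * h1 t with hu_def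
  set ud : ℝ → ℂ := fun t => ((1-t : ℝ):ℂ) * h2 t with hud_def
  have hrpow : ∀ t ∈ Set.Icc (0:ℝ) 1,
      HasDerivAt (fun t => r t ^ α) (rd t * α * r t ^ (α-1)) t := by
    intro t ht
    exact (hrd t).rpow_const (Or.inl (hr_pos t ht).ne')
  have hd0 : ∀ t ∈ Set.Icc (0:ℝ) 1, HasDerivAt h0 (h1 t) t := by
    intro t ht
    exact ((hrpow t ht).ofReal_comp.mul (hw t))
  have hdg : ∀ t ∈ Set.Icc (0:ℝ) 1, HasDerivAt g (gd t) t := by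
    intro t ht
    have hrd' : HasDerivAt rd (2*C2) t := by
      have h := ((hasDerivAt_id t).const_mul (2*C2)).const_add B
      exact h.congr_deriv (by ring)
    have grpow : HasDerivAt (fun t => r t ^ (α-1)) (rd t * (α-1) * r t ^ (α-1-1)) t :=
      (hrd t).rpow_const (Or.inl (hr_pos t ht).ne')
    exact (hrd'.mul_const α).mul grpow
  have hd1 : ∀ t ∈ Set.Icc (0:ℝ) 1, HasDerivAt h1 (h2 t) t := by
    intro t ht
    exact ((hdg t ht).ofReal_comp.mul (hw t)).add ((hrpow t ht).ofReal_comp.mul_const q)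
  have hdu : ∀ t ∈ Set.Icc (0:ℝ) 1, HasDerivAt u (ud t) t := by
    intro t ht
    have hcoe : HasDerivAt (fun t : ℝ => ((1-t : ℝ):ℂ)) ((-1 : ℝ):ℂ) t := by
      have := ((hasDerivAt_id t).const_sub 1)
      exact this.ofReal_comp
    have hprod := hcoe.mul (hd1 t ht)
    have := (hd0 t ht).add hprod
    refine this.congr_deriv ?_
    rw [hud_def]
    push_cast
    ring
  -- bound on derivative of u
  have habs_pow : ∀ t : ℝ, ∀ x : ℝ, r t ^ x = Complex.abs (w t) ^ (2*x) := by
    intro t x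
    rw [hr_sq]
    exact sq_to_rpow (Complex.abs.nonneg _) x
  set Cp : ℝ := (p-1)*|p-3| + 3*(p-1) with hCp_def
  have hCp0 : 0 ≤ Cp := by
    rw [hCp_def]
    have h1 : (0:ℝ) ≤ |p-3| := abs_nonneg _
    nlinarith
  have haq0 : 0 ≤ aq := Complex.abs.nonneg q
  have hbound : ∀ t ∈ Set.Ico (0:ℝ) 1, ‖ud t‖ ≤ Cp * D * aq^2 := by
    intro t ht
    have ht' : t ∈ Set.Icc (0:ℝ) 1 := ⟨ht.1, ht.2.le⟩
    set S : ℝ := Complex.abs (w t) with hS_def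
    have hS : 0 < S := hSpos t ht'
    have hrd2 : |rd t| ≤ 2*S*aq := hrd_bd t
    have hrnn : (0:ℝ) ≤ r t ^ (α-1) := Real.rpow_nonneg (hr_pos t ht').le _
    have hrnn2 : (0:ℝ) ≤ r t ^ (α-1-1) := Real.rpow_nonneg (hr_pos t ht').le _
    have hC2 : C2 = aq^2 := by rw [hC2, haq, ← Complex.sq_abs]
    -- bound |g t|
    have hgS : |g t| ≤ 2*α*aq * S^(p-2) := by
      have h1' : |g t| ≤ (2*S*aq) * α * (r t ^ (α-1)) := by
        rw [hg_def]
        simp only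
        rw [abs_mul, abs_mul, _root_.abs_of_pos hα, _root_.abs_of_nonneg hrnn]
        gcongr
      have hexp : S * S^(2*(α-1)) = S^(p-2) := by
        nth_rewrite 1 [← Real.rpow_one S]
        rw [← Real.rpow_add hS]
        congr 1
        rw [hα_def]; ring
      calc |g t| ≤ (2*S*aq) * α * (r t ^ (α-1)) := h1'
        _ = 2*α*aq * (S * S^(2*(α-1))) := by rw [habs_pow]; ring
        _ = 2*α*aq * S^(p-2) := by rw [hexp]
    -- bound |gd t|
    have hgdS : |gd t| * S ≤ (2*α + 4*α*|α-1|) * aq^2 * S^(p-2) := by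
      have hexp2 : S*(S*S^(2*(α-1-1))) = S^(p-3) := by
        have h1 : S*(S*S^(2*(α-1-1))) = S^(1+(1+2*(α-1-1))) := by
          rw [Real.rpow_add hS, Real.rpow_add hS, Real.rpow_one]
        rw [h1]
        congr 1
        rw [hα_def]; ring
      have hsum : |gd t| ≤ (2*α + 4*α*|α-1|) * aq^2 * S^(p-3) := by
        have habs1 : |(2*C2) * α * r t ^ (α-1)| = 2*C2*α*(r t^(α-1)) := by
          rw [abs_mul, abs_mul, _root_.abs_of_pos hα, _root_.abs_of_nonneg hrnn,
            _root_.abs_of_nonneg (show (0:ℝ) ≤ 2*C2 from mul_nonneg (by norm_num) (Complex.normSq_nonneg q))]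
        have hterm1 : |(2*C2) * α * r t ^ (α-1)| ≤ 2*α*aq^2*S^(p-3) := by
          rw [habs1, hC2, habs_pow]
          have he : 2*(α-1) = p - 3 := by rw [hα_def]; ring
          rw [he]
          exact le_of_eq (by ring)
        have hterm2 : |rd t * α * (rd t * (α-1) * r t ^ (α-1-1))|
            ≤ 4*α*|α-1| * aq^2*S^(p-3) := by
          have : |rd t * α * (rd t * (α-1) * r t ^ (α-1-1))|
              = |rd t| * α * (|rd t| * |α-1| * (r t ^ (α-1-1))) := by
            rw [abs_mul, abs_mul, abs_mul, abs_mul, _root_.abs_of_pos hα, _root_.abs_of_nonneg hrnn2]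
          rw [this]
          calc |rd t| * α * (|rd t| * |α-1| * (r t ^ (α-1-1)))
              ≤ (2*S*aq) * α * ((2*S*aq) * |α-1| * (r t ^ (α-1-1))) := by
                gcongr <;> positivity
            _ = 4*α*|α-1| * aq^2 * (S*(S*S^(2*(α-1-1)))) := by rw [habs_pow]; ring
            _ = 4*α*|α-1| * aq^2*S^(p-3) := by rw [hexp2]
        calc |gd t| ≤ |(2*C2) * α * r t ^ (α-1)|
              + |rd t * α * (rd t * (α-1) * r t ^ (α-1-1))| := by
              rw [hgd_def]; exact abs_add_le _ _
          _ ≤ 2*α*aq^2*S^(p-3) + 4*α*|α-1| * aq^2*S^(p-3) := by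
              exact add_le_add hterm1 hterm2
          _ = (2*α + 4*α*|α-1|) * aq^2 * S^(p-3) := by ring
      have hexp3 : S^(p-3) * S = S^(p-2) := by
        nth_rewrite 2 [← Real.rpow_one S]
        rw [← Real.rpow_add hS]
        congr 1; ring
      calc |gd t| * S ≤ ((2*α + 4*α*|α-1|) * aq^2 * S^(p-3)) * S :=
            mul_le_mul_of_nonneg_right hsum hS.le
        _ = (2*α + 4*α*|α-1|) * aq^2 * (S^(p-3)*S) := by ring
        _ = (2*α + 4*α*|α-1|) * aq^2 * S^(p-2) := by rw [hexp3]
    -- assemble h2 bound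
    have hh2 : ‖h2 t‖ ≤ Cp * aq^2 * S^(p-2) := by
      have habs4 : 4*α*|α-1| = (p-1)*|p-3| := by
        rw [hα_def, show (p-1)/2 - 1 = (p-3)/2 by ring, abs_div, _root_.abs_two]
        ring
      have hgq : ‖((g t : ℝ):ℂ) * q‖ = |g t| * aq := by
        rw [Complex.norm_eq_abs, map_mul, Complex.abs_ofReal, haq]
      have hgdw : ‖((gd t : ℝ):ℂ) * w t‖ = |gd t| * S := by
        rw [Complex.norm_eq_abs, map_mul, Complex.abs_ofReal, hS_def]
      calc ‖h2 t‖ ≤ ‖((gd t : ℝ):ℂ) * w t + ((g t : ℝ):ℂ) * q‖ + ‖((g t:ℝ):ℂ) * q‖ := by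
            rw [hh2_def]; exact norm_add_le _ _
        _ ≤ (‖((gd t : ℝ):ℂ) * w t‖ + ‖((g t : ℝ):ℂ) * q‖) + ‖((g t:ℝ):ℂ) * q‖ := by
            gcongr; exact norm_add_le _ _
        _ = |gd t| * S + |g t| * aq + |g t| * aq := by rw [hgq, hgdw]
        _ ≤ (2*α + 4*α*|α-1|) * aq^2 * S^(p-2)
              + (2*α*aq * S^(p-2)) * aq + (2*α*aq * S^(p-2)) * aq := by
            have h1 := mul_le_mul_of_nonneg_right hgS haq0
            have h2 := hgdS
            have h3 : |g t| * aq ≤ (2*α*aq * S^(p-2)) * aq := h1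
            linarith
        _ = ((2*α + 4*α*|α-1|) + 4*α) * aq^2 * S^(p-2) := by ring
        _ = Cp * aq^2 * S^(p-2) := by
            rw [hCp_def, ← habs4, hα_def]; ring_nf
    have hSD : S^(p-2) ≤ D := hD t ht'
    calc ‖ud t‖ = |1-t| * ‖h2 t‖ := by
          rw [hud_def]; simp only
          rw [Complex.norm_eq_abs, map_mul, Complex.abs_ofReal, Complex.norm_eq_abs]
      _ ≤ 1 * ‖h2 t‖ := by
          have h1t : |1-t| ≤ 1 := by
            rw [_root_.abs_of_nonneg (by linarith [ht.2.le] : (0:ℝ) ≤ 1 - t)]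
            linarith [ht.1]
          exact mul_le_mul_of_nonneg_right h1t (norm_nonneg _)
      _ = ‖h2 t‖ := one_mul _
      _ ≤ Cp * aq^2 * S^(p-2) := hh2
      _ ≤ Cp * aq^2 * D := by
          have hnn : 0 ≤ Cp * aq^2 := mul_nonneg hCp0 (sq_nonneg _)
          exact mul_le_mul_of_nonneg_left hSD hnn
      _ = Cp * D * aq^2 := by ring
  -- mean value inequality
  have key := norm_image_sub_le_of_norm_deriv_le_segment'
    (fun t ht => (hdu t ht).hasDerivWithinAt) hbound 1 (by norm_num : (1:ℝ) ∈ Set.Icc (0:ℝ) 1)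
  -- endpoints
  have hw1 : w 1 = z + q := by rw [hw_def]; simp
  have hw0 : w 0 = z := by rw [hw_def]; simp
  have h2α : 2*α = p - 1 := by rw [hα_def]; ring
  have h01 : h0 1 = Fp p (z+q) := by
    rw [hh0_def, Fp]
    simp only
    rw [habs_pow, hw1, h2α]
  have h00 : h0 0 = Fp p z := by
    rw [hh0_def, Fp]
    simp only
    rw [habs_pow, hw0, h2α]
  have hBc : ((B:ℝ):ℂ) = z * (starRingEnd ℂ) q + (starRingEnd ℂ) z * q := by
    rw [hB]
    have h := Complex.add_conj ((starRingEnd ℂ) z * q)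
    simp only [map_mul, Complex.conj_conj] at h
    rw [← h]
    ring
  have h10 : h1 0 = linp p z q := by
    rw [hh1_def, linp]
    simp only
    have hrd0 : rd 0 = B := by rw [hrd_def]; simp
    have hg0 : g 0 = B * α * Complex.abs z ^ (p-3) := by
      rw [hg_def]
      simp only
      rw [hrd0, habs_pow, hw0, show 2*(α-1) = p-3 by rw [hα_def]; ring]
    have hr0 : r 0 ^ α = Complex.abs z ^ (p-1) := by
      rw [habs_pow, hw0, h2α]
    rw [hg0, hr0, hw0, ← hBc, hα_def]
    push_cast
    ring
  have heq : Fp p (z+q) - Fp p z - linp p z q = u 1 - u 0 := by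
    rw [hu_def]
    simp only
    rw [h01, h00, h10]
    push_cast
    ring
  rw [heq, ← Complex.norm_eq_abs]
  calc ‖u 1 - u 0‖ ≤ Cp * D * aq^2 * (1 - 0) := key
    _ = Cp * D * aq^2 := by ring


lemma seg_abs_le (z q : ℂ) {t : ℝ} (ht : t ∈ Set.Icc (0:ℝ) 1) :
    Complex.abs ((t:ℂ)*q) ≤ Complex.abs q := by
  rw [map_mul, Complex.abs_ofReal, _root_.abs_of_nonneg ht.1]
  exact mul_le_of_le_one_left (Complex.abs.nonneg q) ht.2

lemma seg_lower (z q : ℂ) {t : ℝ} (ht : t ∈ Set.Icc (0:ℝ) 1) :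
    Complex.abs z - Complex.abs q ≤ Complex.abs (z + (t:ℂ)*q) := by
  have h1 := seg_abs_le z q ht
  have h2 : Complex.abs z ≤ Complex.abs (z + (t:ℂ)*q) + Complex.abs ((t:ℂ)*q) := by
    have h3 := Complex.abs.add_le (z + (t:ℂ)*q) (-((t:ℂ)*q))
    simp only [add_neg_cancel_right, AbsoluteValue.map_neg] at h3
    exact h3
  linarith

lemma seg_upper (z q : ℂ) {t : ℝ} (ht : t ∈ Set.Icc (0:ℝ) 1) :
    Complex.abs (z + (t:ℂ)*q) ≤ Complex.abs z + Complex.abs q := by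
  have h1 := seg_abs_le z q ht
  have h2 := Complex.abs.add_le z ((t:ℂ)*q)
  linarith

lemma abs_Fp (p : ℝ) (hp : 1 < p) (w : ℂ) :
    Complex.abs (Fp p w) = Complex.abs w ^ p := by
  rw [Fp, map_mul, Complex.abs_ofReal,
    _root_.abs_of_nonneg (Real.rpow_nonneg (Complex.abs.nonneg w) _)]
  rcases eq_or_ne w 0 with h | h
  · simp [h, Real.zero_rpow (by linarith : p - 1 ≠ 0), Real.zero_rpow (by linarith : p ≠ 0)]
  · have hw : 0 < Complex.abs w := Complex.abs.pos h
    rw [← Real.rpow_add_one hw.ne' (p-1)]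
    norm_num

lemma pow_collapse (p : ℝ) (hp : 1 < p) (x : ℝ) (hx : 0 ≤ x) :
    x ^ (p-3) * (x * x) = x ^ (p-1) := by
  rcases eq_or_lt_of_le hx with h | h
  · rw [← h]
    simp [Real.zero_rpow (by linarith : p - 1 ≠ 0)]
  · have h2 : x * x = x ^ (2:ℝ) := by
      rw [show (2:ℝ) = ((2:ℕ):ℝ) by norm_num, Real.rpow_natCast]
      ring
    rw [h2, ← Real.rpow_add h]
    congr 1; ring

lemma crude_est (p : ℝ) (hp : 1 < p) (z q : ℂ) :
    Complex.abs (Fp p (z+q) - Fp p z - linp p z q) ≤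
      Complex.abs (z+q)^p + Complex.abs z^p + Complex.abs z^(p-1)*Complex.abs q
        + (p-1)*(Complex.abs z^(p-1)*Complex.abs q) := by
  have tri : ∀ u v : ℂ, Complex.abs (u - v) ≤ Complex.abs u + Complex.abs v := fun u v => by
    rw [← Complex.norm_eq_abs, ← Complex.norm_eq_abs, ← Complex.norm_eq_abs]
    exact norm_sub_le u v
  have h1 : Complex.abs (Fp p (z+q) - Fp p z - linp p z q)
      ≤ Complex.abs (Fp p (z+q)) + Complex.abs (Fp p z) + Complex.abs (linp p z q) := by
    calc Complex.abs (Fp p (z+q) - Fp p z - linp p z q)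
        ≤ Complex.abs (Fp p (z+q) - Fp p z) + Complex.abs (linp p z q) := tri _ _
      _ ≤ (Complex.abs (Fp p (z+q)) + Complex.abs (Fp p z)) + Complex.abs (linp p z q) := by
          gcongr
          exact tri _ _
      _ = _ := by ring
  have hlin : Complex.abs (linp p z q)
      ≤ Complex.abs z^(p-1)*Complex.abs q + (p-1)*(Complex.abs z^(p-1)*Complex.abs q) := by
    rw [linp]
    calc Complex.abs _ ≤
        Complex.abs (((Complex.abs z ^ (p-1) : ℝ) : ℂ) * q) +
        Complex.abs ((((p-1)/2 : ℝ) : ℂ) * ((Complex.abs z ^ (p-3) : ℝ) : ℂ) * z *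
          (z * (starRingEnd ℂ) q + (starRingEnd ℂ) z * q)) := Complex.abs.add_le _ _
      _ ≤ Complex.abs z^(p-1)*Complex.abs q + (p-1)*(Complex.abs z^(p-1)*Complex.abs q) := by
          gcongr ?_ + ?_
          · rw [map_mul, Complex.abs_ofReal,
              _root_.abs_of_nonneg (Real.rpow_nonneg (Complex.abs.nonneg z) _)]
          · have hsum : Complex.abs (z * (starRingEnd ℂ) q + (starRingEnd ℂ) z * q)
                ≤ 2 * (Complex.abs z * Complex.abs q) := by
              calc Complex.abs (z * (starRingEnd ℂ) q + (starRingEnd ℂ) z * q)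
                  ≤ Complex.abs (z * (starRingEnd ℂ) q) + Complex.abs ((starRingEnd ℂ) z * q) :=
                    Complex.abs.add_le _ _
                _ = 2 * (Complex.abs z * Complex.abs q) := by
                    rw [map_mul, map_mul, Complex.abs_conj, Complex.abs_conj]; ring
            rw [map_mul, map_mul, map_mul, Complex.abs_ofReal, Complex.abs_ofReal,
              _root_.abs_of_nonneg (Real.rpow_nonneg (Complex.abs.nonneg z) _),
              _root_.abs_of_nonneg (show (0:ℝ) ≤ (p-1)/2 by linarith)]
            calc (p-1)/2 * Complex.abs z ^ (p-3) * Complex.abs z *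
                  Complex.abs (z * (starRingEnd ℂ) q + (starRingEnd ℂ) z * q)
                ≤ (p-1)/2 * Complex.abs z ^ (p-3) * Complex.abs z *
                  (2 * (Complex.abs z * Complex.abs q)) := by
                  exact mul_le_mul_of_nonneg_left hsum
                    (mul_nonneg (mul_nonneg (by linarith)
                      (Real.rpow_nonneg (Complex.abs.nonneg z) _)) (Complex.abs.nonneg z))
              _ = (p-1) * ((Complex.abs z ^ (p-3) * (Complex.abs z * Complex.abs z))
                    * Complex.abs q) := by ring
              _ = (p-1)*(Complex.abs z^(p-1)*Complex.abs q) := by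
                  rw [pow_collapse p hp _ (Complex.abs.nonneg z)]
  calc Complex.abs (Fp p (z+q) - Fp p z - linp p z q)
      ≤ Complex.abs (Fp p (z+q)) + Complex.abs (Fp p z) + Complex.abs (linp p z q) := h1
    _ ≤ _ := by
      rw [abs_Fp p hp, abs_Fp p hp]
      linarith [hlin]

lemma inner_est (p : ℝ) (hp : 1 < p) (m M : ℝ) (hm : 0 < m) (z q : ℂ)
    (hz1 : m ≤ Complex.abs z) (hz2 : Complex.abs z ≤ M) (hq : Complex.abs q ≤ 1) :
    Complex.abs (Fp p (z+q) - Fp p z - linp p z q) ≤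
      (((p-1)*|p-3| + 3*(p-1)) * (max ((m/2)^(p-2)) ((2*M)^(p-2)))
        + ((M+1)^p + M^p + M^(p-1) + (p-1)*M^(p-1)) * (2/m)^2) * Complex.abs q ^ 2 := by
  have hmM : m ≤ M := le_trans hz1 hz2
  have hM : 0 < M := lt_of_lt_of_le hm hmM
  have haq0 : 0 ≤ Complex.abs q := Complex.abs.nonneg q
  have hCp0 : 0 ≤ (p-1)*|p-3| + 3*(p-1) := by
    have := abs_nonneg (p-3); nlinarith
  have hD0 : 0 ≤ max ((m/2)^(p-2)) ((2*M)^(p-2)) :=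
    le_trans (Real.rpow_nonneg (by linarith) _) (le_max_left _ _)
  have hT0 : 0 ≤ (M+1)^p + M^p + M^(p-1) + (p-1)*M^(p-1) := by
    have h1 : (0:ℝ) ≤ (M+1)^p := Real.rpow_nonneg (by linarith) _
    have h2 : (0:ℝ) ≤ M^p := Real.rpow_nonneg hM.le _
    have h3 : (0:ℝ) ≤ M^(p-1) := Real.rpow_nonneg hM.le _
    nlinarith
  rcases le_or_gt (Complex.abs q) (m/2) with hcase | hcase
  · -- Taylor regime
    have hbd := taylor_core p hp z q (m/2) (by linarith)
      (fun t ht => by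
        have := seg_lower z q ht
        linarith)
      (max ((m/2)^(p-2)) ((2*M)^(p-2)))
      (fun t ht => by
        have hl := seg_lower z q ht
        have hu := seg_upper z q ht
        rcases le_or_gt 2 p with h2p | h2p
        · refine le_trans ?_ (le_max_right _ _)
          exact Real.rpow_le_rpow (Complex.abs.nonneg _) (by linarith) (by linarith)
        · refine le_trans ?_ (le_max_left _ _)
          exact Real.rpow_le_rpow_of_nonpos (by linarith) (by linarith) (by linarith))
    calc Complex.abs (Fp p (z+q) - Fp p z - linp p z q)
        ≤ ((p-1)*|p-3| + 3*(p-1)) * (max ((m/2)^(p-2)) ((2*M)^(p-2))) * Complex.abs q ^ 2 :=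
          hbd
      _ ≤ _ := by
          have hq2 : (0:ℝ) ≤ Complex.abs q ^ 2 := sq_nonneg _
          have hrest : 0 ≤ ((M+1)^p + M^p + M^(p-1) + (p-1)*M^(p-1)) * (2/m)^2 := by
            positivity
          nlinarith
  · -- crude regime
    have hcrude := crude_est p hp z q
    have h1 : Complex.abs (z+q)^p ≤ (M+1)^p := by
      refine Real.rpow_le_rpow (Complex.abs.nonneg _) ?_ (by linarith)
      have := Complex.abs.add_le z q
      linarith
    have h2 : Complex.abs z^p ≤ M^p :=
      Real.rpow_le_rpow (Complex.abs.nonneg _) hz2 (by linarith)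
    have h3 : Complex.abs z^(p-1) ≤ M^(p-1) :=
      Real.rpow_le_rpow (Complex.abs.nonneg _) hz2 (by linarith)
    have h4 : Complex.abs z^(p-1)*Complex.abs q ≤ M^(p-1) := by
      calc Complex.abs z^(p-1)*Complex.abs q ≤ M^(p-1) * 1 := by
            exact mul_le_mul h3 hq haq0 (Real.rpow_nonneg hM.le _)
        _ = M^(p-1) := mul_one _
    have hcr2 : Complex.abs (Fp p (z+q) - Fp p z - linp p z q)
        ≤ (M+1)^p + M^p + M^(p-1) + (p-1)*M^(p-1) := by
      have h5 : (p-1)*(Complex.abs z^(p-1)*Complex.abs q) ≤ (p-1)*M^(p-1) :=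
        mul_le_mul_of_nonneg_left h4 (by linarith)
      linarith
    have hone : 1 ≤ (2/m)^2 * Complex.abs q ^ 2 := by
      have h6 : 1 ≤ (2/m) * Complex.abs q := by
        rw [div_mul_eq_mul_div, le_div_iff₀ hm]
        linarith
      calc (1:ℝ) = 1 * 1 := by norm_num
        _ ≤ ((2/m) * Complex.abs q) * ((2/m) * Complex.abs q) := by nlinarith
        _ = (2/m)^2 * Complex.abs q ^ 2 := by ring
    calc Complex.abs (Fp p (z+q) - Fp p z - linp p z q)
        ≤ ((M+1)^p + M^p + M^(p-1) + (p-1)*M^(p-1)) * 1 := by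
          rw [mul_one]; exact hcr2
      _ ≤ ((M+1)^p + M^p + M^(p-1) + (p-1)*M^(p-1)) * ((2/m)^2 * Complex.abs q ^ 2) :=
          mul_le_mul_of_nonneg_left hone hT0
      _ ≤ _ := by
          have := mul_nonneg (mul_nonneg hCp0 hD0) (sq_nonneg (Complex.abs q))
          nlinarith [this]

lemma outer_est (p : ℝ) (hp : 1 < p) (M : ℝ) (hM : 0 < M) (z q : ℂ)
    (hz : Complex.abs z ≤ M) (hq : Complex.abs q ≤ 1) :
    Complex.abs (Fp p (z+q) - Fp p z - linp p z q) ≤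
      (((p-1)*|p-3| + 3*(p-1)) * (1 + ((3/2)*M)^(p-2))
        + (3^p + 2^p + 2^(p-1) + (p-1)*2^(p-1))) * Complex.abs q ^ (min p 2) := by
  set aq : ℝ := Complex.abs q with haq_def
  have haq0 : 0 ≤ aq := Complex.abs.nonneg q
  have hCp0 : 0 ≤ (p-1)*|p-3| + 3*(p-1) := by
    have := abs_nonneg (p-3); nlinarith
  have hD0 : (0:ℝ) ≤ 1 + ((3/2)*M)^(p-2) := by
    have := Real.rpow_nonneg (show (0:ℝ) ≤ (3/2)*M by linarith) (p-2)
    linarith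
  have hE0 : (0:ℝ) ≤ 3^p + 2^p + 2^(p-1) + (p-1)*2^(p-1) := by
    have h1 : (0:ℝ) ≤ (3:ℝ)^p := Real.rpow_nonneg (by norm_num) _
    have h2 : (0:ℝ) ≤ (2:ℝ)^p := Real.rpow_nonneg (by norm_num) _
    have h3 : (0:ℝ) ≤ (2:ℝ)^(p-1) := Real.rpow_nonneg (by norm_num) _
    nlinarith
  have hmin1 : 0 < min p 2 := by
    rcases min_choice p 2 with h | h <;> rw [h] <;> linarith
  have hminp : min p 2 ≤ p := min_le_left _ _
  rcases eq_or_ne q 0 with hq0 | hq0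
  · subst hq0
    have hz0 : Fp p (z+0) - Fp p z - linp p z 0 = 0 := by
      rw [linp]
      simp
    rw [hz0]
    simp only [map_zero]
    have : Complex.abs (0:ℂ) ^ (min p 2) = 0 := by
      simp only [map_zero]
      exact Real.zero_rpow hmin1.ne'
    rw [this, mul_zero]
  · have haqpos : 0 < aq := Complex.abs.pos hq0
    have hqp_le : aq ^ p ≤ aq ^ (min p 2) :=
      Real.rpow_le_rpow_of_exponent_ge haqpos hq hminp
    rcases le_or_gt (Complex.abs z) (2 * aq) with hcase | hcase
    · -- crude regime: |z| ≤ 2|q|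
      have hcrude := crude_est p hp z q
      have h1 : Complex.abs (z+q)^p ≤ 3^p * aq^p := by
        rw [← Real.mul_rpow (by norm_num) haq0]
        refine Real.rpow_le_rpow (Complex.abs.nonneg _) ?_ (by linarith)
        have := Complex.abs.add_le z q
        linarith
      have h2 : Complex.abs z^p ≤ 2^p * aq^p := by
        rw [← Real.mul_rpow (by norm_num) haq0]
        exact Real.rpow_le_rpow (Complex.abs.nonneg _) hcase (by linarith)
      have h3 : Complex.abs z^(p-1) ≤ 2^(p-1) * aq^(p-1) := by
        rw [← Real.mul_rpow (by norm_num) haq0]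
        exact Real.rpow_le_rpow (Complex.abs.nonneg _) hcase (by linarith)
      have haqp : aq^(p-1) * aq = aq^p := by
        rw [← Real.rpow_add_one haqpos.ne' (p-1)]
        norm_num
      have h4 : Complex.abs z^(p-1) * aq ≤ 2^(p-1) * aq^p := by
        calc Complex.abs z^(p-1) * aq ≤ (2^(p-1) * aq^(p-1)) * aq :=
              mul_le_mul_of_nonneg_right h3 haq0
          _ = 2^(p-1) * (aq^(p-1) * aq) := by ring
          _ = 2^(p-1) * aq^p := by rw [haqp]
      have h5 : (p-1)*(Complex.abs z^(p-1) * aq) ≤ (p-1)*(2^(p-1) * aq^p) :=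
        mul_le_mul_of_nonneg_left h4 (by linarith)
      have hcr : Complex.abs (Fp p (z+q) - Fp p z - linp p z q)
          ≤ (3^p + 2^p + 2^(p-1) + (p-1)*2^(p-1)) * aq^p := by
        have e : (3^p + 2^p + 2^(p-1) + (p-1)*2^(p-1)) * aq^p
            = 3^p*aq^p + 2^p*aq^p + 2^(p-1)*aq^p + (p-1)*(2^(p-1)*aq^p) := by ring
        rw [e]
        linarith
      calc Complex.abs (Fp p (z+q) - Fp p z - linp p z q)
          ≤ (3^p + 2^p + 2^(p-1) + (p-1)*2^(p-1)) * aq^p := hcr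
        _ ≤ (3^p + 2^p + 2^(p-1) + (p-1)*2^(p-1)) * aq^(min p 2) :=
            mul_le_mul_of_nonneg_left hqp_le hE0
        _ ≤ _ := by
            have h6 : 0 ≤ aq ^ (min p 2) := Real.rpow_nonneg haq0 _
            nlinarith [mul_nonneg (mul_nonneg hCp0 hD0) h6]
    · -- Taylor regime : 2|q| < |z|
      have hzpos : 0 < Complex.abs z := by linarith
      have hlow : ∀ t ∈ Set.Icc (0:ℝ) 1, Complex.abs z / 2 ≤ Complex.abs (z + (t:ℂ)*q) := by
        intro t ht
        have := seg_lower z q ht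
        linarith
      rcases le_or_gt 2 p with h2p | h2p
      · -- p ≥ 2, min = 2
        have hmin2 : min p 2 = 2 := min_eq_right h2p
        have hbd := taylor_core p hp z q (Complex.abs z / 2) (by linarith) hlow
          (((3/2)*M)^(p-2))
          (fun t ht => by
            have hu := seg_upper z q ht
            refine Real.rpow_le_rpow (Complex.abs.nonneg _) ?_ (by linarith)
            linarith)
        have hsq : aq ^ (min p 2) = aq ^ 2 := by
          rw [hmin2, show ((2:ℝ)) = ((2:ℕ):ℝ) by norm_num, Real.rpow_natCast]
        rw [hsq]
        calc Complex.abs (Fp p (z+q) - Fp p z - linp p z q)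
            ≤ ((p-1)*|p-3| + 3*(p-1)) * ((3/2)*M)^(p-2) * aq ^ 2 := hbd
          _ ≤ _ := by
              have h6 : 0 ≤ aq ^ 2 := sq_nonneg _
              have h7 : (0:ℝ) ≤ ((3/2)*M)^(p-2) :=
                Real.rpow_nonneg (by linarith) _
              nlinarith [mul_nonneg hE0 h6, mul_nonneg hCp0 h6]
      · -- p < 2, min = p
        have hminp2 : min p 2 = p := min_eq_left (by linarith)
        have hbd := taylor_core p hp z q (Complex.abs z / 2) (by linarith) hlow
          ((Complex.abs z / 2)^(p-2))
          (fun t ht => by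
            exact Real.rpow_le_rpow_of_nonpos (by linarith) (hlow t ht) (by linarith))
        have hkey : (Complex.abs z / 2)^(p-2) * aq ^ 2 ≤ aq ^ p := by
          have e1 : aq ^ (2:ℝ) = aq ^ 2 := by
            rw [show ((2:ℝ)) = ((2:ℕ):ℝ) by norm_num, Real.rpow_natCast]
          have e2 : aq ^ (2:ℝ) = aq^(2-p) * aq^p := by
            rw [← Real.rpow_add haqpos]
            norm_num
          have e3 : aq^(2-p) ≤ (Complex.abs z / 2)^(2-p) :=
            Real.rpow_le_rpow haq0 (by linarith) (by linarith)
          have e4 : (Complex.abs z / 2)^(p-2) * (Complex.abs z / 2)^(2-p) = 1 := by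
            rw [← Real.rpow_add (by linarith : 0 < Complex.abs z / 2)]
            norm_num
          have h7 : (0:ℝ) ≤ (Complex.abs z / 2)^(p-2) :=
            Real.rpow_nonneg (by linarith) _
          calc (Complex.abs z / 2)^(p-2) * aq ^ 2
              = (Complex.abs z / 2)^(p-2) * (aq^(2-p) * aq^p) := by rw [← e2, e1]
            _ ≤ (Complex.abs z / 2)^(p-2) * ((Complex.abs z / 2)^(2-p) * aq^p) := by
                refine mul_le_mul_of_nonneg_left ?_ h7
                exact mul_le_mul_of_nonneg_right e3 (Real.rpow_nonneg haq0 _)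
            _ = ((Complex.abs z / 2)^(p-2) * (Complex.abs z / 2)^(2-p)) * aq^p := by ring
            _ = aq ^ p := by rw [e4, one_mul]
        rw [hminp2]
        calc Complex.abs (Fp p (z+q) - Fp p z - linp p z q)
            ≤ ((p-1)*|p-3| + 3*(p-1)) * (Complex.abs z / 2)^(p-2) * aq ^ 2 := hbd
          _ = ((p-1)*|p-3| + 3*(p-1)) * ((Complex.abs z / 2)^(p-2) * aq ^ 2) := by ring
          _ ≤ ((p-1)*|p-3| + 3*(p-1)) * aq ^ p := mul_le_mul_of_nonneg_left hkey hCp0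
          _ ≤ _ := by
              have h6 : 0 ≤ aq ^ p := Real.rpow_nonneg haq0 _
              have h7 : (0:ℝ) ≤ ((3/2)*M)^(p-2) := Real.rpow_nonneg (by linarith) _
              nlinarith [mul_nonneg hE0 h6, mul_nonneg (mul_nonneg hCp0 h7) h6]

lemma Bq_eq (p δ κ b a : ℝ) (q : ℂ) (y s : ℝ) :
    Bq p δ κ b a q y s = (1 + Complex.I * δ) *
      (Fp p (phiA p δ κ b a y s + q) - Fp p (phiA p δ κ b a y s)
        - linp p (phiA p δ κ b a y s) q) := by
  rw [Bq, Fp, Fp, linp]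
  simp only [Complex.norm_eq_abs]
  ring

lemma abs_rcpow (x : ℝ) (w : ℂ) :
    Complex.abs (rcpow x w) = Real.exp (w.re * Real.log x) := by
  rw [rcpow, Complex.abs_exp]
  congr 1
  simp [Complex.mul_re]

lemma abs_rcpow_of_pos {x : ℝ} (hx : 0 < x) (w : ℂ) :
    Complex.abs (rcpow x w) = x ^ w.re := by
  rw [abs_rcpow, Real.rpow_def_of_pos hx, mul_comm]

lemma exp_re_eq (p δ : ℝ) (hp : 1 < p) :
    ((-(1 + Complex.I * (δ:ℂ)) / ((p:ℂ) - 1)).re) = -(1:ℝ)/(p-1) := by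
  rw [Complex.div_re]
  simp [Complex.normSq_apply]
  have h1 : p - 1 ≠ 0 := by linarith
  field_simp
  ring

lemma abs_rcpow_kappa (κ δ : ℝ) : Complex.abs (rcpow κ (-(Complex.I * δ))) = 1 := by
  rw [abs_rcpow]
  simp

lemma abs_one_add_I_mul (δ : ℝ) :
    Complex.abs (1 + Complex.I * (δ:ℂ)) ≤ 1 + |δ| := by
  calc Complex.abs (1 + Complex.I * (δ:ℂ))
      ≤ Complex.abs 1 + Complex.abs (Complex.I * (δ:ℂ)) := Complex.abs.add_le _ _
    _ = 1 + |δ| := by rw [map_one, map_mul, Complex.abs_I, Complex.abs_ofReal, one_mul]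

lemma abs_phi_term1 (p δ κ b a y s : ℝ) (hp : 1 < p) (hb : 0 ≤ b) (hs : 1 ≤ s) :
    Complex.abs (rcpow κ (-(Complex.I * δ)) *
        rcpow (p - 1 + b * y ^ 2 / Real.sqrt s) (-(1 + Complex.I * δ) / (p - 1)))
      = (p - 1 + b * y ^ 2 / Real.sqrt s) ^ (-(1:ℝ)/(p-1)) := by
  have hsq : 0 < Real.sqrt s := Real.sqrt_pos.2 (by linarith)
  have hXpos : 0 < p - 1 + b * y ^ 2 / Real.sqrt s := by
    have : 0 ≤ b * y ^ 2 / Real.sqrt s := by positivity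
    linarith
  rw [map_mul, abs_rcpow_kappa, one_mul, abs_rcpow_of_pos hXpos, exp_re_eq p δ hp]

lemma phi_upper (p δ κ b a : ℝ) (hp : 1 < p) (hb : 0 ≤ b) (ha : 0 ≤ a)
    (hκval : κ = (p-1) ^ (-(1:ℝ)/(p-1)))
    (y s : ℝ) (hs : 1 ≤ s) :
    Complex.abs (phiA p δ κ b a y s) ≤ κ + (1+|δ|)*a := by
  have hsq : 0 < Real.sqrt s := Real.sqrt_pos.2 (by linarith)
  have hs1 : 1 ≤ Real.sqrt s := by
    rw [show (1:ℝ) = Real.sqrt 1 by simp]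
    exact Real.sqrt_le_sqrt hs
  have hXge : p - 1 ≤ p - 1 + b * y ^ 2 / Real.sqrt s := by
    have : 0 ≤ b * y ^ 2 / Real.sqrt s := by positivity
    linarith
  have hT1 : Complex.abs (rcpow κ (-(Complex.I * δ)) *
      rcpow (p - 1 + b * y ^ 2 / Real.sqrt s) (-(1 + Complex.I * δ) / (p - 1))) ≤ κ := by
    rw [abs_phi_term1 p δ κ b a y s hp hb hs, hκval]
    exact Real.rpow_le_rpow_of_nonpos (by linarith) hXge
      (by apply div_nonpos_of_nonpos_of_nonneg <;> linarith)
  have hT2 : Complex.abs ((1 + Complex.I * (δ:ℂ)) * ((a / Real.sqrt s : ℝ) : ℂ))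
      ≤ (1+|δ|)*a := by
    rw [map_mul, Complex.abs_ofReal, _root_.abs_of_nonneg (by positivity : (0:ℝ) ≤ a / Real.sqrt s)]
    have h3 : a / Real.sqrt s ≤ a := by
      rw [div_le_iff₀ hsq]
      nlinarith
    have h4 := abs_one_add_I_mul δ
    have h5 : (0:ℝ) ≤ Complex.abs (1 + Complex.I * (δ:ℂ)) := Complex.abs.nonneg _
    have h6 : (0:ℝ) ≤ a / Real.sqrt s := by positivity
    nlinarith
  calc Complex.abs (phiA p δ κ b a y s) ≤ _ + _ := Complex.abs.add_le _ _
    _ ≤ κ + (1+|δ|)*a := add_le_add hT1 hT2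

lemma phi_lower (p δ κ b a K : ℝ) (hp : 1 < p) (hb : 0 ≤ b) (ha : 0 ≤ a) (hK : 1 ≤ K)
    (y s : ℝ)
    (hs : max 1 ((2*(1+|δ|)*a/((p-1+4*K^2*b) ^ (-(1:ℝ)/(p-1))))^2) ≤ s)
    (hy : |y| ≤ 2 * K * s ^ ((1:ℝ)/4)) :
    (p-1+4*K^2*b) ^ (-(1:ℝ)/(p-1)) / 2 ≤ Complex.abs (phiA p δ κ b a y s) := by
  set m₀ : ℝ := (p-1+4*K^2*b) ^ (-(1:ℝ)/(p-1)) with hm₀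
  have hm₀pos : 0 < m₀ := Real.rpow_pos_of_pos (by nlinarith) _
  have hs1 : 1 ≤ s := le_trans (le_max_left _ _) hs
  have hs0 : (0:ℝ) ≤ s := by linarith
  have hsq : 0 < Real.sqrt s := Real.sqrt_pos.2 (by linarith)
  -- bound on X
  have h14 : (s ^ ((1:ℝ)/4))^2 = Real.sqrt s := by
    rw [Real.sqrt_eq_rpow, ← Real.rpow_natCast (s ^ ((1:ℝ)/4)) 2, ← Real.rpow_mul hs0]
    norm_num
  have hy2 : y^2 ≤ 4*K^2*Real.sqrt s := by
    have h1 : y^2 = |y|^2 := (_root_.sq_abs y).symm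
    have h2 : |y|^2 ≤ (2 * K * s ^ ((1:ℝ)/4))^2 := by
      apply pow_le_pow_left₀ (abs_nonneg y) hy
    rw [h1]
    calc |y|^2 ≤ (2 * K * s ^ ((1:ℝ)/4))^2 := h2
      _ = 4*K^2*(s ^ ((1:ℝ)/4))^2 := by ring
      _ = 4*K^2*Real.sqrt s := by rw [h14]
  have hXle : p - 1 + b * y ^ 2 / Real.sqrt s ≤ p - 1 + 4*K^2*b := by
    have : b * y ^ 2 / Real.sqrt s ≤ 4*K^2*b := by
      rw [div_le_iff₀ hsq]
      nlinarith
    linarith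
  have hXpos : 0 < p - 1 + b * y ^ 2 / Real.sqrt s := by
    have : 0 ≤ b * y ^ 2 / Real.sqrt s := by positivity
    linarith
  -- lower bound for the principal term
  have hT1 : m₀ ≤ Complex.abs (rcpow κ (-(Complex.I * δ)) *
      rcpow (p - 1 + b * y ^ 2 / Real.sqrt s) (-(1 + Complex.I * δ) / (p - 1))) := by
    rw [abs_phi_term1 p δ κ b a y s hp hb hs1, hm₀]
    exact Real.rpow_le_rpow_of_nonpos hXpos hXle
      (by apply div_nonpos_of_nonpos_of_nonneg <;> linarith)
  -- upper bound for the correction term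
  have hsqge : 2*(1+|δ|)*a/m₀ ≤ Real.sqrt s := by
    have h1 : Real.sqrt ((2*(1+|δ|)*a/m₀)^2) ≤ Real.sqrt s :=
      Real.sqrt_le_sqrt (le_trans (le_max_right _ _) hs)
    rwa [Real.sqrt_sq (by positivity)] at h1
  have hT2 : Complex.abs ((1 + Complex.I * (δ:ℂ)) * ((a / Real.sqrt s : ℝ) : ℂ))
      ≤ m₀/2 := by
    rw [map_mul, Complex.abs_ofReal,
      _root_.abs_of_nonneg (by positivity : (0:ℝ) ≤ a / Real.sqrt s)]
    have h4 := abs_one_add_I_mul δ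
    have h6 : (0:ℝ) ≤ a / Real.sqrt s := by positivity
    have h7 : Complex.abs (1 + Complex.I * (δ:ℂ)) * (a / Real.sqrt s)
        ≤ (1+|δ|) * (a / Real.sqrt s) :=
      mul_le_mul_of_nonneg_right h4 h6
    have h8 : (1+|δ|) * (a / Real.sqrt s) ≤ m₀/2 := by
      rw [mul_div_assoc', div_le_div_iff₀ hsq (by norm_num : (0:ℝ) < 2)]
      have h9 : 2*(1+|δ|)*a ≤ m₀ * Real.sqrt s := (div_le_iff₀' hm₀pos).mp hsqge
      linarith
    linarith
  -- triangle inequality from below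
  have htr : Complex.abs (rcpow κ (-(Complex.I * δ)) *
      rcpow (p - 1 + b * y ^ 2 / Real.sqrt s) (-(1 + Complex.I * δ) / (p - 1)))
      ≤ Complex.abs (phiA p δ κ b a y s)
        + Complex.abs ((1 + Complex.I * (δ:ℂ)) * ((a / Real.sqrt s : ℝ) : ℂ)) := by
    have h10 := Complex.abs.add_le (phiA p δ κ b a y s)
      (-((1 + Complex.I * (δ:ℂ)) * ((a / Real.sqrt s : ℝ) : ℂ)))
    simp only [AbsoluteValue.map_neg] at h10
    have h11 : phiA p δ κ b a y s + -((1 + Complex.I * (δ:ℂ)) * ((a / Real.sqrt s : ℝ) : ℂ))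
        = rcpow κ (-(Complex.I * δ)) *
          rcpow (p - 1 + b * y ^ 2 / Real.sqrt s) (-(1 + Complex.I * δ) / (p - 1)) := by
      rw [phiA]; ring
    rwa [h11] at h10
  linarith


set_option maxHeartbeats 1000000

/-- `|B(q,y,s)| ≤ C(K)|q|²` in the inner region `|y| ≤ 2K s^{1/4}`
(for `|q| ≤ 1` and `s` large), and `|B(q,y,s)| ≤ C|q|^{min(p,2)}` in the outer region
`|y| ≥ s^{1/4}`. -/
theorem stmt8 (p δ κ b a : ℝ) (hp : 1 < p) (hδ : δ = Real.sqrt p)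
    (hκ : κ = (p - 1) ^ (-(1 : ℝ) / (p - 1)))
    (hb : b = (p - 1) ^ 2 / (8 * Real.sqrt (p * (p + 1))))
    (ha : a = κ / (4 * Real.sqrt (p * (p + 1)))) :
    (∀ K : ℝ, 1 ≤ K → ∃ C : ℝ, 0 < C ∧ ∃ s₀ : ℝ, 1 ≤ s₀ ∧
      ∀ s : ℝ, s₀ ≤ s → ∀ y : ℝ, |y| ≤ 2 * K * s ^ ((1 : ℝ) / 4) →
        ∀ q : ℂ, ‖q‖ ≤ 1 →
          ‖Bq p δ κ b a q y s‖ ≤ C * ‖q‖ ^ 2) ∧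
    (∃ C : ℝ, 0 < C ∧ ∃ s₁ : ℝ, 1 ≤ s₁ ∧
      ∀ s : ℝ, s₁ ≤ s → ∀ y : ℝ, s ^ ((1 : ℝ) / 4) ≤ |y| →
        ∀ q : ℂ, ‖q‖ ≤ 1 →
          ‖Bq p δ κ b a q y s‖ ≤ C * ‖q‖ ^ (min p 2)) := by
  have hp1 : (0:ℝ) < p - 1 := by linarith
  have hpp1 : (0:ℝ) < p*(p+1) := by nlinarith
  have hsqrtpp : 0 < Real.sqrt (p*(p+1)) := Real.sqrt_pos.2 hpp1
  have hκpos : 0 < κ := by rw [hκ]; exact Real.rpow_pos_of_pos hp1 _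
  have hapos : 0 < a := by rw [ha]; positivity
  have hbpos : 0 < b := by rw [hb]; positivity
  have hδ0 : (0:ℝ) ≤ |δ| := abs_nonneg δ
  set Mφ : ℝ := κ + (1+|δ|)*a with hMφ_def
  have hMφpos : 0 < Mφ := by
    have : 0 < (1+|δ|)*a := by positivity
    rw [hMφ_def]; linarith
  have hphiU : ∀ s : ℝ, 1 ≤ s → ∀ y : ℝ, Complex.abs (phiA p δ κ b a y s) ≤ Mφ :=
    fun s hs y => phi_upper p δ κ b a hp hbpos.le hapos.le hκ y s hs
  have hCp0 : (0:ℝ) ≤ (p-1)*|p-3| + 3*(p-1) := by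
    have := abs_nonneg (p-3); nlinarith
  constructor
  · -- inner region
    intro K hK
    set m₀ : ℝ := (p-1+4*K^2*b) ^ (-(1:ℝ)/(p-1)) with hm₀_def
    have hm₀pos : 0 < m₀ := Real.rpow_pos_of_pos (by nlinarith) _
    set m : ℝ := m₀/2 with hm_def
    have hmpos : 0 < m := by rw [hm_def]; linarith
    set Cin : ℝ := ((p-1)*|p-3| + 3*(p-1)) * (max ((m/2)^(p-2)) ((2*Mφ)^(p-2)))
        + ((Mφ+1)^p + Mφ^p + Mφ^(p-1) + (p-1)*Mφ^(p-1)) * (2/m)^2 with hCin_def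
    have hCin0 : 0 ≤ Cin := by
      rw [hCin_def]
      have h1 : (0:ℝ) ≤ max ((m/2)^(p-2)) ((2*Mφ)^(p-2)) :=
        le_trans (Real.rpow_nonneg (by linarith) _) (le_max_left _ _)
      have h2 : (0:ℝ) ≤ (Mφ+1)^p := Real.rpow_nonneg (by linarith) _
      have h3 : (0:ℝ) ≤ Mφ^p := Real.rpow_nonneg hMφpos.le _
      have h4 : (0:ℝ) ≤ Mφ^(p-1) := Real.rpow_nonneg hMφpos.le _
      have h5 : (0:ℝ) ≤ (2/m)^2 := sq_nonneg _
      have h6 : (0:ℝ) ≤ (p-1)*Mφ^(p-1) := mul_nonneg (by linarith) h4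
      have h7 : (0:ℝ) ≤ (Mφ+1)^p + Mφ^p + Mφ^(p-1) + (p-1)*Mφ^(p-1) := by linarith
      exact add_nonneg (mul_nonneg hCp0 h1) (mul_nonneg h7 h5)
    have hCpos : 0 < (1+|δ|) * Cin + 1 := by
      have := mul_nonneg (show (0:ℝ) ≤ 1+|δ| by linarith) hCin0
      linarith
    refine ⟨(1+|δ|) * Cin + 1, hCpos, max 1 ((2*(1+|δ|)*a/m₀)^2), le_max_left _ _, ?_⟩
    intro s hs y hy q hq
    have hs1 : 1 ≤ s := le_trans (le_max_left _ _) hs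
    have hφU := hphiU s hs1 y
    have hφL : m ≤ Complex.abs (phiA p δ κ b a y s) := by
      rw [hm_def]
      exact phi_lower p δ κ b a K hp hbpos.le hapos.le hK y s hs hy
    have hest := inner_est p hp m Mφ hmpos (phiA p δ κ b a y s) q hφL hφU hq
    rw [Bq_eq]
    simp only [Complex.norm_eq_abs]
    rw [map_mul]
    have hIδ := abs_one_add_I_mul δ
    have habs0 : (0:ℝ) ≤ Complex.abs (Fp p (phiA p δ κ b a y s + q)
        - Fp p (phiA p δ κ b a y s) - linp p (phiA p δ κ b a y s) q) := Complex.abs.nonneg _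
    calc Complex.abs (1 + Complex.I * (δ:ℂ)) * Complex.abs (Fp p (phiA p δ κ b a y s + q)
          - Fp p (phiA p δ κ b a y s) - linp p (phiA p δ κ b a y s) q)
        ≤ (1+|δ|) * (Cin * Complex.abs q ^ 2) := by
          apply mul_le_mul hIδ hest habs0 (by linarith)
      _ = ((1+|δ|) * Cin) * Complex.abs q ^ 2 := by ring
      _ ≤ ((1+|δ|) * Cin + 1) * Complex.abs q ^ 2 := by
          nlinarith [sq_nonneg (Complex.abs q)]
  · -- outer region
    set Cout : ℝ := ((p-1)*|p-3| + 3*(p-1)) * (1 + ((3/2)*Mφ)^(p-2))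
        + (3^p + 2^p + 2^(p-1) + (p-1)*2^(p-1)) with hCout_def
    have hCout0 : 0 ≤ Cout := by
      rw [hCout_def]
      have h1 : (0:ℝ) ≤ ((3/2)*Mφ)^(p-2) := Real.rpow_nonneg (by linarith) _
      have h2 : (0:ℝ) ≤ (3:ℝ)^p := Real.rpow_nonneg (by norm_num) _
      have h3 : (0:ℝ) ≤ (2:ℝ)^p := Real.rpow_nonneg (by norm_num) _
      have h4 : (0:ℝ) ≤ (2:ℝ)^(p-1) := Real.rpow_nonneg (by norm_num) _
      have h5 : (0:ℝ) ≤ (p-1)*2^(p-1) := mul_nonneg (by linarith) h4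
      have h6 := mul_nonneg hCp0 (show (0:ℝ) ≤ 1 + ((3/2)*Mφ)^(p-2) by linarith)
      linarith
    have hCpos : 0 < (1+|δ|) * Cout + 1 := by
      have := mul_nonneg (show (0:ℝ) ≤ 1+|δ| by linarith) hCout0
      linarith
    refine ⟨(1+|δ|) * Cout + 1, hCpos, 1, le_refl 1, ?_⟩
    intro s hs y hy q hq
    have hest := outer_est p hp Mφ hMφpos (phiA p δ κ b a y s) q (hphiU s hs y) hq
    rw [Bq_eq]
    simp only [Complex.norm_eq_abs]
    rw [map_mul]
    have hIδ := abs_one_add_I_mul δ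
    have habs0 : (0:ℝ) ≤ Complex.abs (Fp p (phiA p δ κ b a y s + q)
        - Fp p (phiA p δ κ b a y s) - linp p (phiA p δ κ b a y s) q) := Complex.abs.nonneg _
    have hqmin0 : (0:ℝ) ≤ Complex.abs q ^ (min p 2) :=
      Real.rpow_nonneg (Complex.abs.nonneg q) _
    calc Complex.abs (1 + Complex.I * (δ:ℂ)) * Complex.abs (Fp p (phiA p δ κ b a y s + q)
          - Fp p (phiA p δ κ b a y s) - linp p (phiA p δ κ b a y s) q)
        ≤ (1+|δ|) * (Cout * Complex.abs q ^ (min p 2)) := by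
          apply mul_le_mul hIδ hest habs0 (by linarith)
      _ = ((1+|δ|) * Cout) * Complex.abs q ^ (min p 2) := by ring
      _ ≤ ((1+|δ|) * Cout + 1) * Complex.abs q ^ (min p 2) := by nlinarith
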